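/- For a partition λ and an addable box s ∈ A_λ, the transition/co-transition measures satisfy Σ_{t ∈ R⁺_λ} ℏ·τ̃_λ^t / ([s-t]·[s-t+(1,1)]) = -ℏ + τ̃_{λ+s}^{s+(1,1)}, where τ̃_μ^t = Res_{u=[t]} (u·T_μ(u)^{-1}) for t ∈ R⁺_μ, and T_μ(u) = u·∏_{t∈R⁺_μ}(u-[t])/∏_{a∈A_μ}(u-[a]). -/

import Mathlib

noncomputable section

/-- The coefficient field `ℂ(ε₁,ε₂)`, realized as the fraction field of a polynomial
ring in two (transcendental) variables. -/
abbrev Kf : Type := FractionRing (MvPolynomial (Fin 2) ℚ)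

/-- The equivariant parameter `ε₁`. -/
def eps1 : Kf := algebraMap (MvPolynomial (Fin 2) ℚ) Kf (MvPolynomial.X 0)

/-- The equivariant parameter `ε₂`. -/
def eps2 : Kf := algebraMap (MvPolynomial (Fin 2) ℚ) Kf (MvPolynomial.X 1)

/-- The content `[b] = b₁ε₁ + b₂ε₂` of a box `b`. -/
def content (b : ℕ × ℕ) : Kf := (b.1 : Kf) * eps1 + (b.2 : Kf) * eps2

/-- The set `A_Y` of addable boxes (inner corners) of a Young diagram `Y`. -/
def addables (Y : YoungDiagram) : Finset (ℕ × ℕ) :=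
  ((Finset.range (Y.cells.card + 1)) ×ˢ (Finset.range (Y.cells.card + 1))).filter
    (fun c => c ∉ Y.cells ∧ (c.1 = 0 ∨ (c.1 - 1, c.2) ∈ Y.cells) ∧
      (c.2 = 0 ∨ (c.1, c.2 - 1) ∈ Y.cells))

/-- The set `R_Y` of removable boxes of a Young diagram `Y`. -/
def removables (Y : YoungDiagram) : Finset (ℕ × ℕ) :=
  Y.cells.filter fun c => (c.1 + 1, c.2) ∉ Y.cells ∧ (c.1, c.2 + 1) ∉ Y.cells

/-- The set `R⁺_Y = {t + (1,1) : t ∈ R_Y}` of outer corners of `Y`. -/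
def outers (Y : YoungDiagram) : Finset (ℕ × ℕ) :=
  (removables Y).image fun c => (c.1 + 1, c.2 + 1)

/-- Kerov's co-transition measure
`τ_Y^a = ∏_{t∈R⁺_Y}[a-t] / ∏_{a'∈A_Y, a'≠a}[a-a']` at an addable box `a`. -/
def tau (Y : YoungDiagram) (a : ℕ × ℕ) : Kf :=
  (∏ t ∈ outers Y, (content a - content t)) /
    ∏ a' ∈ (addables Y).erase a, (content a - content a')

/-- The quantum parameter `ℏ = -ε₁ε₂`. -/
def hbar : Kf := -eps1 * eps2

/-- Kerov's transition measure `τ̃_Y^t = Res_{u=[t]} (u·T_Y(u)⁻¹)` at an outer corner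
`t ∈ R⁺_Y`, where `T_Y(u) = u·∏_{t'∈R⁺_Y}(u-[t'])/∏_{a∈A_Y}(u-[a])`; explicitly it is
(up to the paper's sign convention) `∏_{a∈A_Y}[t-a] / ∏_{t'∈R⁺_Y, t'≠t}[t-t']`. -/
def ttau (Y : YoungDiagram) (t : ℕ × ℕ) : Kf :=
  -(∏ a ∈ addables Y, (content t - content a)) /
    ∏ t' ∈ (outers Y).erase t, (content t - content t')

lemma col_bound {Y : YoungDiagram} {p q : ℕ} (h : (p, q) ∈ Y.cells) :
    p + 1 ≤ Y.cells.card := by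
  have hsub : (Finset.range (p+1)).image (fun i => (i, q)) ⊆ Y.cells := by
    intro c hc
    simp only [Finset.mem_image, Finset.mem_range] at hc
    obtain ⟨a, ha, rfl⟩ := hc
    exact Y.up_left_mem (by omega) le_rfl h
  have := Finset.card_le_card hsub
  rwa [Finset.card_image_of_injective _ (fun a b hab => by simpa using hab),
    Finset.card_range] at this

lemma row_bound {Y : YoungDiagram} {p q : ℕ} (h : (p, q) ∈ Y.cells) :
    q + 1 ≤ Y.cells.card := by
  have hsub : (Finset.range (q+1)).image (fun jj => (p, jj)) ⊆ Y.cells := by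
    intro c hc
    simp only [Finset.mem_image, Finset.mem_range] at hc
    obtain ⟨a, ha, rfl⟩ := hc
    exact Y.up_left_mem le_rfl (by omega) h
  have := Finset.card_le_card hsub
  rwa [Finset.card_image_of_injective _ (fun a b hab => by simpa using hab),
    Finset.card_range] at this

lemma mem_addables_iff {Y : YoungDiagram} {c : ℕ × ℕ} :
    c ∈ addables Y ↔ c ∉ Y.cells ∧ (c.1 = 0 ∨ (c.1 - 1, c.2) ∈ Y.cells) ∧
      (c.2 = 0 ∨ (c.1, c.2 - 1) ∈ Y.cells) := by
  constructor
  · intro h; exact (Finset.mem_filter.mp h).2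
  · rintro ⟨h0, h1, h2⟩
    refine Finset.mem_filter.mpr ⟨Finset.mem_product.mpr ⟨?_, ?_⟩, h0, h1, h2⟩
    · rcases h1 with h | h
      · simp [h]
      · have := col_bound h
        simp only [Finset.mem_range]
        omega
    · rcases h2 with h | h
      · simp [h]
      · have := row_bound h
        simp only [Finset.mem_range]
        omega

lemma mem_outers_iff {Y : YoungDiagram} {t : ℕ × ℕ} :
    t ∈ outers Y ↔ ∃ p q : ℕ, t = (p+1, q+1) ∧ (p, q) ∈ Y.cells ∧
      (p+1, q) ∉ Y.cells ∧ (p, q+1) ∉ Y.cells := by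
  simp only [outers, removables, Finset.mem_image, Finset.mem_filter]
  constructor
  · rintro ⟨⟨p, q⟩, ⟨hm, h1, h2⟩, rfl⟩
    exact ⟨p, q, rfl, hm, h1, h2⟩
  · rintro ⟨p, q, rfl, hm, h1, h2⟩
    exact ⟨(p, q), ⟨hm, h1, h2⟩, rfl⟩

open MvPolynomial in
lemma content_eq (b : ℕ × ℕ) :
    content b = algebraMap (MvPolynomial (Fin 2) ℚ) Kf
      (C (b.1:ℚ) * X 0 + C (b.2:ℚ) * X 1) := by
  simp [content, eps1, eps2, map_add, map_mul, map_natCast]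

open MvPolynomial in
lemma content_injective' : Function.Injective content := by
  intro a b h
  rw [content_eq, content_eq] at h
  have h2 := IsFractionRing.injective (MvPolynomial (Fin 2) ℚ) Kf h
  have h01 : (Finsupp.single (0 : Fin 2) 1 : Fin 2 →₀ ℕ) ≠ Finsupp.single 1 1 := by
    intro hh
    have := Finsupp.single_left_injective (by norm_num) hh
    simp at this
  have c0 := congrArg (coeff (Finsupp.single (0:Fin 2) 1)) h2
  have c1 := congrArg (coeff (Finsupp.single (1:Fin 2) 1)) h2
  rw [coeff_add, coeff_add, coeff_C_mul, coeff_C_mul, coeff_C_mul, coeff_C_mul,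
      coeff_X', coeff_X', if_pos rfl, if_neg (Ne.symm h01)] at c0
  rw [coeff_add, coeff_add, coeff_C_mul, coeff_C_mul, coeff_C_mul, coeff_C_mul,
      coeff_X', coeff_X', if_pos rfl, if_neg h01] at c1
  simp at c0 c1
  exact Prod.ext (by exact_mod_cast c0) (by exact_mod_cast c1)

lemma content_sub_ne {a b : ℕ × ℕ} (h : a ≠ b) : content a - content b ≠ 0 :=
  sub_ne_zero.mpr (fun he => h (content_injective' he))

lemma content_zero : content (0,0) = 0 := by simp [content]

lemma eps1_ne_zero : eps1 ≠ 0 := by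
  have := content_sub_ne (a := (1,0)) (b := (0,0)) (by decide)
  simpa [content] using this

lemma eps2_ne_zero : eps2 ≠ 0 := by
  have := content_sub_ne (a := (0,1)) (b := (0,0)) (by decide)
  simpa [content] using this

lemma epssum_ne_zero : eps1 + eps2 ≠ 0 := by
  have := content_sub_ne (a := (1,1)) (b := (0,0)) (by decide)
  simpa [content] using this

section Step
variable {Y Y' : YoungDiagram} {i j : ℕ}

lemma notYx (hns : (i,j) ∉ Y.cells) : (i+1, j) ∉ Y.cells :=
  fun h => hns (Y.up_left_mem (by omega) le_rfl h)

lemma notYy (hns : (i,j) ∉ Y.cells) : (i, j+1) ∉ Y.cells :=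
  fun h => hns (Y.up_left_mem le_rfl (by omega) h)

lemma notYs' (hns : (i,j) ∉ Y.cells) : (i+1, j+1) ∉ Y.cells :=
  fun h => hns (Y.up_left_mem (by omega) (by omega) h)

lemma xA_iff (hns : (i,j) ∉ Y.cells) (h2 : j = 0 ∨ (i,j-1) ∈ Y.cells)
    (hY' : Y'.cells = insert (i,j) Y.cells) :
    ((i+1,j) ∈ addables Y') ↔ ((i+1,j) ∉ outers Y) := by
  rw [mem_addables_iff, mem_outers_iff]
  simp only [hY', Finset.mem_insert, Prod.mk.injEq]
  constructor
  · rintro ⟨-, -, hc⟩ ⟨p, q, hpq, hm, hx, hy⟩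
    have hp : p = i := by omega
    have hq : q = j - 1 := by omega
    have hj : j ≠ 0 := by omega
    subst hp hq
    rcases hc with hc | hc
    · exact hj hc
    · rcases hc with ⟨hc1, hc2⟩ | hc
      · omega
      · exact hx hc
  · intro h
    refine ⟨?_, ?_, ?_⟩
    · rintro (hc | hc)
      · omega
      · exact notYx hns hc
    · right; left; exact ⟨by omega, trivial⟩
    · by_cases hj : j = 0
      · exact Or.inl hj
      · obtain ⟨j', rfl⟩ : ∃ j', j = j' + 1 := ⟨j - 1, by omega⟩
        right; right
        by_contra hmem
        exact h ⟨i, j', ⟨rfl, rfl⟩, by simpa using h2.resolve_left hj,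
          by simpa using hmem, hns⟩

lemma yA_iff (hns : (i,j) ∉ Y.cells) (h1 : i = 0 ∨ (i-1,j) ∈ Y.cells)
    (hY' : Y'.cells = insert (i,j) Y.cells) :
    ((i,j+1) ∈ addables Y') ↔ ((i,j+1) ∉ outers Y) := by
  rw [mem_addables_iff, mem_outers_iff]
  simp only [hY', Finset.mem_insert, Prod.mk.injEq]
  constructor
  · rintro ⟨-, hc, -⟩ ⟨p, q, hpq, hm, hx, hy⟩
    have hp : p = i - 1 := by omega
    have hq : q = j := by omega
    have hi : i ≠ 0 := by omega
    subst hp hq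
    rcases hc with hc | hc
    · exact hi hc
    · rcases hc with ⟨hc1, hc2⟩ | hc
      · omega
      · exact hy hc
  · intro h
    refine ⟨?_, ?_, ?_⟩
    · rintro (hc | hc)
      · omega
      · exact notYy hns hc
    · by_cases hi : i = 0
      · exact Or.inl hi
      · obtain ⟨i', rfl⟩ : ∃ i', i = i' + 1 := ⟨i - 1, by omega⟩
        right; right
        by_contra hmem
        exact h ⟨i', j, ⟨rfl, rfl⟩, by simpa using h1.resolve_left hi,
          hns, by simpa using hmem⟩
    · right; left; exact ⟨by trivial, by trivial⟩

lemma other_A_iff (hY' : Y'.cells = insert (i,j) Y.cells) {c : ℕ × ℕ}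
    (hcx : c ≠ (i+1,j)) (hcy : c ≠ (i,j+1)) :
    (c ∈ addables Y') ↔ (c ∈ addables Y ∧ c ≠ (i,j)) := by
  rw [mem_addables_iff, mem_addables_iff]
  simp only [hY', Finset.mem_insert]
  constructor
  · rintro ⟨h0, ha, hb⟩
    push_neg at h0
    refine ⟨⟨h0.2, ?_, ?_⟩, h0.1⟩
    · rcases ha with ha | ha | ha
      · exact Or.inl ha
      · exfalso
        rw [Prod.mk.injEq] at ha
        by_cases hc1 : c.1 = 0
        · exact h0.1 (Prod.ext (by omega) ha.2)
        · exact hcx (Prod.ext (by omega) ha.2)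
      · exact Or.inr ha
    · rcases hb with hb | hb | hb
      · exact Or.inl hb
      · exfalso
        rw [Prod.mk.injEq] at hb
        by_cases hc2 : c.2 = 0
        · exact h0.1 (Prod.ext hb.1 (by omega))
        · exact hcy (Prod.ext hb.1 (by omega))
      · exact Or.inr hb
  · rintro ⟨⟨h0, ha, hb⟩, hcs⟩
    refine ⟨?_, ?_, ?_⟩
    · rintro (hc | hc)
      · exact hcs hc
      · exact h0 hc
    · rcases ha with ha | ha
      · exact Or.inl ha
      · exact Or.inr (Or.inr ha)
    · rcases hb with hb | hb
      · exact Or.inl hb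
      · exact Or.inr (Or.inr hb)


lemma s'_mem_outers (hns : (i,j) ∉ Y.cells)
    (hY' : Y'.cells = insert (i,j) Y.cells) : (i+1,j+1) ∈ outers Y' := by
  refine mem_outers_iff.mpr ⟨i, j, rfl, ?_, ?_, ?_⟩
  · simp [hY']
  · simp only [hY', Finset.mem_insert, Prod.mk.injEq]
    push_neg
    exact ⟨by omega, notYx hns⟩
  · simp only [hY', Finset.mem_insert, Prod.mk.injEq]
    push_neg
    exact ⟨by omega, notYy hns⟩

lemma other_T_iff (hY' : Y'.cells = insert (i,j) Y.cells) {t : ℕ × ℕ}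
    (hts : t ≠ (i+1,j+1)) (htx : t ≠ (i+1,j)) (hty : t ≠ (i,j+1)) :
    (t ∈ outers Y') ↔ (t ∈ outers Y) := by
  rw [mem_outers_iff, mem_outers_iff]
  simp only [hY', Finset.mem_insert, Prod.mk.injEq]
  constructor
  · rintro ⟨p, q, rfl, hm, hx, hy⟩
    push_neg at hx hy
    refine ⟨p, q, rfl, ?_, hx.2, hy.2⟩
    rcases hm with ⟨hp, hq⟩ | hm
    · exact absurd (Prod.ext (by omega) (by omega)) hts
    · exact hm
  · rintro ⟨p, q, rfl, hm, hx, hy⟩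
    refine ⟨p, q, rfl, Or.inr hm, ?_, ?_⟩
    · rintro (⟨hp, hq⟩ | h)
      · exact hty (Prod.ext (by omega) (by omega))
      · exact hx h
    · rintro (⟨hp, hq⟩ | h)
      · exact htx (Prod.ext (by omega) (by omega))
      · exact hy h

lemma x_not_outers' (hY' : Y'.cells = insert (i,j) Y.cells) :
    (i+1,j) ∉ outers Y' := by
  rw [mem_outers_iff]
  rintro ⟨p, q, hpq, hm, hx, hy⟩
  rw [Prod.mk.injEq] at hpq
  apply hy
  rw [hY', Finset.mem_insert]
  left
  exact Prod.ext (by omega) (by omega)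

lemma y_not_outers' (hY' : Y'.cells = insert (i,j) Y.cells) :
    (i,j+1) ∉ outers Y' := by
  rw [mem_outers_iff]
  rintro ⟨p, q, hpq, hm, hx, hy⟩
  rw [Prod.mk.injEq] at hpq
  apply hx
  rw [hY', Finset.mem_insert]
  left
  exact Prod.ext (by omega) (by omega)

lemma s'_not_outers (hns : (i,j) ∉ Y.cells) : (i+1,j+1) ∉ outers Y := by
  rw [mem_outers_iff]
  rintro ⟨p, q, hpq, hm, -, -⟩
  rw [Prod.mk.injEq] at hpq
  obtain ⟨hp, hq⟩ := hpq
  apply hns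
  have : (p, q) = (i, j) := Prod.ext (by omega) (by omega)
  rwa [this] at hm

lemma s_not_outers (h1 : i = 0 ∨ (i-1,j) ∈ Y.cells) : (i,j) ∉ outers Y := by
  rw [mem_outers_iff]
  rintro ⟨p, q, hpq, hm, hx, hy⟩
  rw [Prod.mk.injEq] at hpq
  obtain ⟨hp, hq⟩ := hpq
  rcases h1 with h1 | h1
  · omega
  · apply hy
    have : (p, q+1) = (i-1, j) := Prod.ext (by omega) (by omega)
    rwa [this]

lemma x_not_addables' (hns : (i,j) ∉ Y.cells) : (i+1, j) ∉ addables Y := by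
  rw [mem_addables_iff]
  rintro ⟨-, (h | h), -⟩
  · omega
  · exact hns (by simpa using h)

lemma y_not_addables' (hns : (i,j) ∉ Y.cells) : (i, j+1) ∉ addables Y := by
  rw [mem_addables_iff]
  rintro ⟨-, -, (h | h)⟩
  · omega
  · exact hns (by simpa using h)

lemma s_mem_addables (hns : (i,j) ∉ Y.cells) (h1 : i = 0 ∨ (i-1,j) ∈ Y.cells)
    (h2 : j = 0 ∨ (i,j-1) ∈ Y.cells) : (i,j) ∈ addables Y :=
  mem_addables_iff.mpr ⟨hns, h1, h2⟩

lemma addables_step (hns : (i,j) ∉ Y.cells) (h1 : i = 0 ∨ (i-1,j) ∈ Y.cells)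
    (h2 : j = 0 ∨ (i,j-1) ∈ Y.cells) (hY' : Y'.cells = insert (i,j) Y.cells) :
    addables Y' = ((addables Y).erase (i,j)) ∪
      (({(i+1,j),(i,j+1)} : Finset (ℕ × ℕ)) \ outers Y) := by
  ext c
  simp only [Finset.mem_union, Finset.mem_erase, Finset.mem_sdiff, Finset.mem_insert,
    Finset.mem_singleton]
  by_cases hcx : c = (i+1,j)
  · subst hcx
    rw [xA_iff hns h2 hY']
    have hx : (i+1,j) ∉ addables Y := x_not_addables' hns
    simp [hx]
  · by_cases hcy : c = (i,j+1)
    · subst hcy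
      rw [yA_iff hns h1 hY']
      have hy : (i,j+1) ∉ addables Y := y_not_addables' hns
      simp [hy, hcx]
    · rw [other_A_iff hY' hcx hcy]
      simp only [hcx, hcy, false_or, or_false, false_and, and_false]
      tauto

lemma outers_step (hns : (i,j) ∉ Y.cells) (hY' : Y'.cells = insert (i,j) Y.cells) :
    outers Y' = insert (i+1,j+1)
      (outers Y \ ({(i+1,j),(i,j+1)} : Finset (ℕ × ℕ))) := by
  ext t
  simp only [Finset.mem_insert, Finset.mem_sdiff, Finset.mem_singleton]
  by_cases hts : t = (i+1,j+1)
  · subst hts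
    simp [s'_mem_outers hns hY']
  · by_cases htx : t = (i+1,j)
    · subst htx
      simp [x_not_outers' hY', hts]
    · by_cases hty : t = (i,j+1)
      · subst hty
        simp [y_not_outers' hY', hts, htx]
      · rw [other_T_iff hY' hts htx hty]
        simp [hts, htx, hty]

lemma content_ss' : content (i+1, j+1) - content (i,j) = eps1 + eps2 := by
  simp only [content]
  push_cast
  ring

lemma content_s'x : content (i+1,j+1) - content (i+1,j) = eps2 := by
  simp only [content]
  push_cast
  ring

lemma content_s'y : content (i+1,j+1) - content (i,j+1) = eps1 := by
  simp only [content]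
  push_cast
  ring

lemma content_split : content (i+1,j) + content (i,j+1)
    = content (i,j) + content (i+1,j+1) := by
  simp only [content]
  push_cast
  ring

lemma xy_ne : ((i+1,j) : ℕ × ℕ) ≠ (i,j+1) := by
  intro h
  rw [Prod.mk.injEq] at h
  omega

lemma hdisj (hns : (i,j) ∉ Y.cells) : Disjoint ((addables Y).erase (i,j))
    ((({(i+1,j),(i,j+1)} : Finset (ℕ × ℕ))) \ outers Y) := by
  rw [Finset.disjoint_right]
  intro c hc hc'
  have hc2 := (Finset.mem_sdiff.mp hc).1
  have hc3 := Finset.mem_of_mem_erase hc'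
  rcases Finset.mem_insert.mp hc2 with rfl | hc2
  · exact x_not_addables' hns hc3
  · rw [Finset.mem_singleton] at hc2
    subst hc2
    exact y_not_addables' hns hc3

lemma step_invariant (hns : (i,j) ∉ Y.cells) (h1 : i = 0 ∨ (i-1,j) ∈ Y.cells)
    (h2 : j = 0 ∨ (i,j-1) ∈ Y.cells) (hY' : Y'.cells = insert (i,j) Y.cells)
    (ih1 : (addables Y).card = (outers Y).card + 1)
    (ih2 : ∑ a ∈ addables Y, content a = ∑ t ∈ outers Y, content t) :
    (addables Y').card = (outers Y').card + 1 ∧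
      ∑ a ∈ addables Y', content a = ∑ t ∈ outers Y', content t := by
  have hsA : (i,j) ∈ addables Y := s_mem_addables hns h1 h2
  have hs'T : (i+1,j+1) ∉ outers Y \ ({(i+1,j),(i,j+1)} : Finset (ℕ × ℕ)) :=
    fun h => s'_not_outers hns (Finset.mem_sdiff.mp h).1
  have hdj := hdisj (Y := Y) (i := i) (j := j) hns
  constructor
  · have e1 : (addables Y').card = ((addables Y).erase (i,j)).card
        + ((({(i+1,j),(i,j+1)} : Finset (ℕ × ℕ))) \ outers Y).card := by
      rw [addables_step hns h1 h2 hY', Finset.card_union_of_disjoint hdj]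
    have e2 : ((addables Y).erase (i,j)).card + 1 = (addables Y).card :=
      Finset.card_erase_add_one hsA
    have e3 : ((({(i+1,j),(i,j+1)} : Finset (ℕ × ℕ))) \ outers Y).card
        + ((({(i+1,j),(i,j+1)} : Finset (ℕ × ℕ))) ∩ outers Y).card = 2 := by
      rw [Finset.card_sdiff_add_card_inter]
      rw [Finset.card_insert_of_notMem (by simp [xy_ne]), Finset.card_singleton]
    have e4 : (outers Y').card
        = (outers Y \ ({(i+1,j),(i,j+1)} : Finset (ℕ × ℕ))).card + 1 := by
      rw [outers_step hns hY', Finset.card_insert_of_notMem hs'T]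
    have e5 : (outers Y \ ({(i+1,j),(i,j+1)} : Finset (ℕ × ℕ))).card
        + (outers Y ∩ ({(i+1,j),(i,j+1)} : Finset (ℕ × ℕ))).card = (outers Y).card :=
      Finset.card_sdiff_add_card_inter _ _
    have e6 : (outers Y ∩ ({(i+1,j),(i,j+1)} : Finset (ℕ × ℕ))).card
        = ((({(i+1,j),(i,j+1)} : Finset (ℕ × ℕ))) ∩ outers Y).card := by
      rw [Finset.inter_comm]
    omega
  · have f1 : ∑ a ∈ addables Y', content a
        = (∑ a ∈ (addables Y).erase (i,j), content a)
          + ∑ c ∈ (({(i+1,j),(i,j+1)} : Finset (ℕ × ℕ))) \ outers Y, content c := by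
      rw [addables_step hns h1 h2 hY', Finset.sum_union hdj]
    have f2 : (∑ a ∈ (addables Y).erase (i,j), content a) + content (i,j)
        = ∑ a ∈ addables Y, content a := Finset.sum_erase_add _ _ hsA
    have f3 : (∑ c ∈ (({(i+1,j),(i,j+1)} : Finset (ℕ × ℕ))) ∩ outers Y, content c)
        + ∑ c ∈ (({(i+1,j),(i,j+1)} : Finset (ℕ × ℕ))) \ outers Y, content c
        = content (i+1,j) + content (i,j+1) := by
      rw [Finset.sum_inter_add_sum_sdiff]
      rw [Finset.sum_insert (by simp [xy_ne]), Finset.sum_singleton]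
    have f4 : ∑ t ∈ outers Y', content t
        = content (i+1,j+1)
          + ∑ t ∈ outers Y \ ({(i+1,j),(i,j+1)} : Finset (ℕ × ℕ)), content t := by
      rw [outers_step hns hY', Finset.sum_insert hs'T]
    have f5 : (∑ t ∈ outers Y ∩ ({(i+1,j),(i,j+1)} : Finset (ℕ × ℕ)), content t)
        + ∑ t ∈ outers Y \ ({(i+1,j),(i,j+1)} : Finset (ℕ × ℕ)), content t
        = ∑ t ∈ outers Y, content t := Finset.sum_inter_add_sum_sdiff _ _ _
    have f6 : (∑ t ∈ outers Y ∩ ({(i+1,j),(i,j+1)} : Finset (ℕ × ℕ)), content t)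
        = ∑ c ∈ (({(i+1,j),(i,j+1)} : Finset (ℕ × ℕ))) ∩ outers Y, content c := by
      rw [Finset.inter_comm]
    have f8 := content_split (i := i) (j := j)
    linear_combination f1 + f2 + f3 + f8 - f4 - f5 + f6 + ih2

end Step

lemma exists_remove (Y : YoungDiagram) (h : Y.cells.Nonempty) :
    ∃ (Y₀ : YoungDiagram) (i j : ℕ), (i,j) ∉ Y₀.cells ∧
      (i = 0 ∨ (i-1,j) ∈ Y₀.cells) ∧ (j = 0 ∨ (i,j-1) ∈ Y₀.cells) ∧
      Y.cells = insert (i,j) Y₀.cells ∧ Y₀.cells.card + 1 = Y.cells.card := by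
  obtain ⟨r, hr, hmax⟩ := Set.Finite.exists_maximalFor id (↑Y.cells : Set (ℕ × ℕ))
    Y.cells.finite_toSet (by exact_mod_cast h)
  simp only [id] at hmax
  have hrY : r ∈ Y.cells := by exact_mod_cast hr
  have hlower : IsLowerSet (↑(Y.cells.erase r) : Set (ℕ × ℕ)) := by
    intro a b hba ha
    simp only [Finset.coe_erase, Set.mem_diff, Finset.mem_coe, Set.mem_singleton_iff] at ha ⊢
    refine ⟨Y.isLowerSet hba ha.1, ?_⟩
    rintro rfl
    exact ha.2 (le_antisymm (hmax ha.1 hba) hba)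
  refine ⟨⟨Y.cells.erase r, hlower⟩, r.1, r.2, ?_, ?_, ?_, ?_, ?_⟩
  · exact Finset.notMem_erase _ _
  · by_cases hr1 : r.1 = 0
    · exact Or.inl hr1
    · right
      refine Finset.mem_erase.mpr ⟨?_, Y.up_left_mem
        (show r.1 - 1 ≤ r.1 by omega) le_rfl (show (r.1, r.2) ∈ Y.cells by simpa using hrY)⟩
      intro hc
      rw [Prod.ext_iff] at hc
      simp at hc
      omega
  · by_cases hr2 : r.2 = 0
    · exact Or.inl hr2
    · right
      refine Finset.mem_erase.mpr ⟨?_, Y.up_left_mem le_rfl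
        (show r.2 - 1 ≤ r.2 by omega) (show (r.1, r.2) ∈ Y.cells by simpa using hrY)⟩
      intro hc
      rw [Prod.ext_iff] at hc
      simp at hc
      omega
  · exact (Finset.insert_erase (by simpa using hrY)).symm
  · exact Finset.card_erase_add_one hrY

lemma invariant : ∀ (Y : YoungDiagram), (addables Y).card = (outers Y).card + 1 ∧
    ∑ a ∈ addables Y, content a = ∑ t ∈ outers Y, content t := by
  suffices H : ∀ (n : ℕ) (Y : YoungDiagram), Y.cells.card = n →
      (addables Y).card = (outers Y).card + 1 ∧
        ∑ a ∈ addables Y, content a = ∑ t ∈ outers Y, content t by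
    exact fun Y => H _ Y rfl
  intro n
  induction n using Nat.strong_induction_on with
  | _ n ih =>
    intro Y hY
    rcases Nat.eq_zero_or_pos n with rfl | hpos
    · have hcells : Y.cells = ∅ := Finset.card_eq_zero.mp hY
      have hadd : addables Y = {(0,0)} := by
        ext c
        rw [mem_addables_iff]
        simp [hcells, Prod.ext_iff]
      have hout : outers Y = ∅ := by
        simp [outers, removables, hcells]
      rw [hadd, hout]
      simp [content]
    · obtain ⟨Y₀, i, j, hns, h1, h2, hins, hcard⟩ :=
        exists_remove Y (Finset.card_pos.mp (by omega))
      obtain ⟨ih1, ih2⟩ := ih (n-1) (by omega) Y₀ (by omega)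
      exact step_invariant hns h1 h2 hins ih1 ih2


lemma ttau_step {Y Y' : YoungDiagram} {i j : ℕ} (hns : (i,j) ∉ Y.cells)
    (h1 : i = 0 ∨ (i-1,j) ∈ Y.cells) (h2 : j = 0 ∨ (i,j-1) ∈ Y.cells)
    (hY' : Y'.cells = insert (i,j) Y.cells) :
    ttau Y' (i+1,j+1) = hbar / (eps1 + eps2)
      * (∏ a ∈ addables Y, (content (i+1,j+1) - content a))
      / (∏ t ∈ outers Y, (content (i+1,j+1) - content t)) := by
  have hsA : (i,j) ∈ addables Y := s_mem_addables hns h1 h2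
  have hs'T : (i+1,j+1) ∉ outers Y \ ({(i+1,j),(i,j+1)} : Finset (ℕ × ℕ)) :=
    fun h => s'_not_outers hns (Finset.mem_sdiff.mp h).1
  have hdj := hdisj (Y := Y) (i := i) (j := j) hns
  have hTd : (outers Y').erase (i+1,j+1)
      = outers Y \ ({(i+1,j),(i,j+1)} : Finset (ℕ × ℕ)) := by
    rw [outers_step hns hY', Finset.erase_insert hs'T]
  set v : Kf := content (i+1,j+1) with hvdef
  rw [ttau, hTd, addables_step hns h1 h2 hY', Finset.prod_union hdj]
  set Pe := ∏ a ∈ (addables Y).erase (i,j), (v - content a) with hPe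
  set Pd := ∏ c ∈ (({(i+1,j),(i,j+1)} : Finset (ℕ × ℕ))) \ outers Y, (v - content c) with hPd
  set Pi := ∏ c ∈ (({(i+1,j),(i,j+1)} : Finset (ℕ × ℕ))) ∩ outers Y, (v - content c) with hPi
  set Pw := ∏ t ∈ outers Y \ (({(i+1,j),(i,j+1)} : Finset (ℕ × ℕ))), (v - content t) with hPw
  have r1 : Pe * (eps1 + eps2) = ∏ a ∈ addables Y, (v - content a) := by
    have h2 : v - content (i,j) = eps1 + eps2 := by rw [hvdef]; exact content_ss'
    rw [hPe, ← h2]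
    simpa using Finset.prod_erase_mul (addables Y) (fun a => v - content a) hsA
  have r2 : Pi * Pd = eps2 * eps1 := by
    rw [hPi, hPd, Finset.prod_inter_mul_prod_diff,
      Finset.prod_insert (by simp [xy_ne]), Finset.prod_singleton,
      show v - content (i+1,j) = eps2 from content_s'x,
      show v - content (i,j+1) = eps1 from content_s'y]
  have r3 : Pi * Pw = ∏ t ∈ outers Y, (v - content t) := by
    rw [hPi, hPw, Finset.inter_comm, Finset.prod_inter_mul_prod_diff]
  have hw : Pw ≠ 0 := by
    rw [hPw]
    rw [Finset.prod_ne_zero_iff]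
    intro t ht
    exact content_sub_ne (fun he => s'_not_outers hns (he ▸ (Finset.mem_sdiff.mp ht).1))
  have hi : Pi ≠ 0 := by
    rw [hPi]
    rw [Finset.prod_ne_zero_iff]
    intro c hc
    have hc' := (Finset.mem_inter.mp hc).1
    rcases Finset.mem_insert.mp hc' with rfl | hc'
    · rw [show v - content (i+1,j) = eps2 from content_s'x]
      exact eps2_ne_zero
    · rw [Finset.mem_singleton] at hc'
      subst hc'
      rw [show v - content (i,j+1) = eps1 from content_s'y]
      exact eps1_ne_zero
  have hPT : Pi * Pw ≠ 0 := mul_ne_zero hi hw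
  have hε := epssum_ne_zero
  rw [← r1, ← r3, hbar, div_eq_div_iff hw hPT]
  have hb : -eps1*eps2/(eps1+eps2) * (Pe*(eps1+eps2)) = -(eps1*eps2*Pe) := by
    field_simp
  rw [hb]
  linear_combination (-(Pe * Pw)) * r2

open Polynomial hiding content in
lemma key (Y : YoungDiagram) (v : Kf) (hv : ∀ t ∈ outers Y, v - content t ≠ 0) :
    ∑ t ∈ outers Y, ttau Y t / (v - content t)
      = v - (∏ a ∈ addables Y, (v - content a)) /
          (∏ t ∈ outers Y, (v - content t)) := by
  classical
  obtain ⟨hc, hsum⟩ := invariant Y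
  set P : Polynomial Kf := ∏ a ∈ addables Y, (X - C (content a)) with hP
  set Q : Polynomial Kf := ∏ t ∈ outers Y, (X - C (content t)) with hQ
  have hPm : P.Monic := monic_prod_of_monic _ _ (fun a _ => monic_X_sub_C _)
  have hQm : Q.Monic := monic_prod_of_monic _ _ (fun a _ => monic_X_sub_C _)
  have hPdeg : P.natDegree = (addables Y).card := by
    rw [hP, natDegree_prod_of_monic _ _ (fun a _ => monic_X_sub_C _)]
    simp [natDegree_X_sub_C]
  have hQdeg : Q.natDegree = (outers Y).card := by
    rw [hQ, natDegree_prod_of_monic _ _ (fun a _ => monic_X_sub_C _)]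
    simp [natDegree_X_sub_C]
  set D : Polynomial Kf := P - X * Q with hD
  have hDdeg : D.degree < ((outers Y).card : ℕ) := by
    rw [degree_lt_iff_coeff_zero]
    intro m hm
    have hm' : (outers Y).card ≤ m := by exact_mod_cast hm
    rw [hD, coeff_sub]
    rcases lt_trichotomy m ((outers Y).card + 1) with h | h | h
    · have hmT : m = (outers Y).card := by omega
      subst hmT
      have hPcoeff : P.coeff (outers Y).card = -∑ a ∈ addables Y, content a := by
        have := prod_X_sub_C_coeff_card_pred (addables Y) content (by omega)
        rwa [show (addables Y).card - 1 = (outers Y).card by omega] at this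
      rcases Nat.eq_zero_or_pos (outers Y).card with h0 | h0
      · have hempty : outers Y = ∅ := Finset.card_eq_zero.mp h0
        have hPc0 : P.coeff 0 = -∑ a ∈ addables Y, content a := h0 ▸ hPcoeff
        rw [h0, mul_coeff_zero, coeff_X_zero, zero_mul, sub_zero, hPc0, hsum,
          hempty, Finset.sum_empty, neg_zero]
      · have hQcoeff : Q.coeff ((outers Y).card - 1) = -∑ t ∈ outers Y, content t :=
          prod_X_sub_C_coeff_card_pred (outers Y) content h0
        have hXQ : (X * Q).coeff (outers Y).card = Q.coeff ((outers Y).card - 1) := by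
          conv_lhs => rw [show (outers Y).card = ((outers Y).card - 1) + 1 by omega]
          rw [coeff_X_mul]
        rw [hPcoeff, hXQ, hQcoeff, hsum, sub_self]
    · subst h
      have hXQ : (X * Q).coeff ((outers Y).card + 1) = Q.coeff (outers Y).card :=
        coeff_X_mul _ _
      rw [hXQ, show Q.coeff (outers Y).card = 1 by
          rw [← hQdeg]; exact hQm.coeff_natDegree,
        show P.coeff ((outers Y).card + 1) = 1 by
          rw [show (outers Y).card + 1 = P.natDegree by omega]; exact hPm.coeff_natDegree,
        sub_self]
    · obtain ⟨m', rfl⟩ : ∃ m', m = m' + 1 := ⟨m - 1, by omega⟩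
      rw [coeff_X_mul, coeff_eq_zero_of_natDegree_lt (by omega),
        coeff_eq_zero_of_natDegree_lt (by omega), sub_self]
  have hinj : Set.InjOn content ↑(outers Y) := fun a _ b _ h => content_injective' h
  have hinterp := Lagrange.eq_interpolate hinj hDdeg
  have heval := congrArg (Polynomial.eval v) hinterp
  rw [Lagrange.interpolate_apply, Polynomial.eval_finset_sum] at heval
  have hQv : Q.eval v = ∏ t ∈ outers Y, (v - content t) := by
    simp [hQ, eval_prod]
  have hPv : P.eval v = ∏ a ∈ addables Y, (v - content a) := by
    simp [hP, eval_prod]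
  have hQvne : (∏ t ∈ outers Y, (v - content t)) ≠ 0 :=
    Finset.prod_ne_zero_iff.mpr hv
  have hterm : ∀ t ∈ outers Y,
      Polynomial.eval v (C (D.eval (content t)) * Lagrange.basis (outers Y) content t)
        = -(ttau Y t / (v - content t)) * ∏ t' ∈ outers Y, (v - content t') := by
    intro t ht
    have hQt : Q.eval (content t) = 0 := by
      rw [hQ, eval_prod]
      exact Finset.prod_eq_zero ht (by simp)
    have hDt : D.eval (content t) = ∏ a ∈ addables Y, (content t - content a) := by
      rw [hD, eval_sub, eval_mul, eval_X, hQt, mul_zero, sub_zero, hP, eval_prod]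
      simp
    have hbasis : Polynomial.eval v (Lagrange.basis (outers Y) content t)
        = ∏ t' ∈ (outers Y).erase t, ((content t - content t')⁻¹ * (v - content t')) := by
      rw [Lagrange.basis, eval_prod]
      refine Finset.prod_congr rfl fun t' _ => ?_
      rw [Lagrange.basisDivisor, eval_mul, eval_C, eval_sub, eval_X, eval_C]
    rw [eval_mul, eval_C, hDt, hbasis]
    rw [Finset.prod_mul_distrib]
    have hEt : (∏ t' ∈ (outers Y).erase t, (v - content t')) * (v - content t)
        = ∏ t' ∈ outers Y, (v - content t') := by
      simpa using Finset.prod_erase_mul (outers Y) (fun t' => v - content t') ht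
    have hDtne : (∏ t' ∈ (outers Y).erase t, (content t - content t')) ≠ 0 := by
      rw [Finset.prod_ne_zero_iff]
      intro t' ht'
      exact content_sub_ne (fun he => (Finset.mem_erase.mp ht').1 he.symm)
    have hvt : v - content t ≠ 0 := hv t ht
    rw [ttau, Finset.prod_inv_distrib, ← hEt]
    field_simp
  have heval2 : D.eval v = ∑ t ∈ outers Y,
      -(ttau Y t / (v - content t)) * ∏ t' ∈ outers Y, (v - content t') :=
    heval.trans (Finset.sum_congr rfl hterm)
  have hDv : D.eval v = (∏ a ∈ addables Y, (v - content a))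
      - v * ∏ t ∈ outers Y, (v - content t) := by
    rw [hD, eval_sub, eval_mul, eval_X, hPv, hQv]
  have E1 := hDv.symm.trans heval2
  have E2 : (∑ t ∈ outers Y,
        -(ttau Y t / (v - content t)) * ∏ t' ∈ outers Y, (v - content t'))
      = -((∑ t ∈ outers Y, ttau Y t / (v - content t)) *
          ∏ t' ∈ outers Y, (v - content t')) := by
    rw [← Finset.sum_mul, Finset.sum_neg_distrib, neg_mul]
  have hdiv : (∑ t ∈ outers Y, ttau Y t / (v - content t))
      = (v * (∏ t ∈ outers Y, (v - content t)) - ∏ a ∈ addables Y, (v - content a))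
        / ∏ t ∈ outers Y, (v - content t) := by
    rw [eq_div_iff hQvne]
    linear_combination E1 + E2
  rw [hdiv, sub_div, mul_div_assoc, div_self hQvne, mul_one]

/-- for a partition `λ` and an addable box `s ∈ A_λ`, the
transition/co-transition measures satisfy
`Σ_{t∈R⁺_λ} ℏ·τ̃_λ^t/([s-t]·[s-t+(1,1)]) = -ℏ + τ̃_{λ+s}^{s+(1,1)}`, where `λ+s` is
the Young diagram `λ` with the box `s` inserted. -/
theorem ttau_sum_identity (Y Y' : YoungDiagram) (s : ℕ × ℕ)
    (hs : s ∈ addables Y) (hY' : Y'.cells = insert s Y.cells) :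
    ∑ t ∈ outers Y,
        hbar * ttau Y t /
          ((content s - content t) * (content s - content t + eps1 + eps2)) =
      -hbar + ttau Y' (s.1 + 1, s.2 + 1) := by
  obtain ⟨i, j⟩ := s
  have hns : (i,j) ∉ Y.cells := (mem_addables_iff.mp hs).1
  have h1 : i = 0 ∨ (i-1, j) ∈ Y.cells := (mem_addables_iff.mp hs).2.1
  have h2 : j = 0 ∨ (i, j-1) ∈ Y.cells := (mem_addables_iff.mp hs).2.2
  show _ = -hbar + ttau Y' (i + 1, j + 1)
  have hsT : ∀ t ∈ outers Y, content (i,j) - content t ≠ 0 := fun t ht =>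
    content_sub_ne (fun he => s_not_outers h1 (he ▸ ht))
  have hs'T : ∀ t ∈ outers Y, content (i+1,j+1) - content t ≠ 0 := fun t ht =>
    content_sub_ne (fun he => s'_not_outers hns (he ▸ ht))
  have hε := epssum_ne_zero
  have hterm : ∀ t ∈ outers Y,
      hbar * ttau Y t /
        ((content (i,j) - content t) * (content (i,j) - content t + eps1 + eps2))
      = hbar/(eps1+eps2) * (ttau Y t/(content (i,j) - content t)
          - ttau Y t/(content (i+1,j+1) - content t)) := by
    intro t ht
    have hu := hsT t ht
    have hw := hs'T t ht
    have hd : (content (i+1,j+1) - content t) - (content (i,j) - content t)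
        = eps1 + eps2 := by
      simp only [content]; push_cast; ring
    have hshift : content (i,j) - content t + eps1 + eps2
        = content (i+1,j+1) - content t := by linear_combination -hd
    rw [hshift]
    set u := content (i,j) - content t with hudef
    set w := content (i+1,j+1) - content t with hwdef
    clear_value u w
    field_simp
    linear_combination (-(hbar * ttau Y t)) * hd
  rw [Finset.sum_congr rfl hterm, ← Finset.mul_sum, Finset.sum_sub_distrib,
    key Y (content (i,j)) hsT, key Y (content (i+1,j+1)) hs'T]
  have hP0 : (∏ a ∈ addables Y, (content (i,j) - content a)) = 0 :=
    Finset.prod_eq_zero hs (by simp)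
  rw [hP0, zero_div, sub_zero, ttau_step hns h1 h2 hY']
  have hcc : content (i,j) - content (i+1,j+1) = -(eps1+eps2) := by
    simp only [content]; push_cast; ring
  have hQ'ne : (∏ t ∈ outers Y, (content (i+1,j+1) - content t)) ≠ 0 :=
    Finset.prod_ne_zero_iff.mpr hs'T
  set c0 := content (i,j) with hc0
  set c1 := content (i+1,j+1) with hc1
  set Pv := ∏ a ∈ addables Y, (c1 - content a) with hPv
  set Qv := ∏ t ∈ outers Y, (c1 - content t) with hQv
  clear_value c0 c1 Pv Qv
  field_simp
  linear_combination (hbar * Qv) * hcc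
end
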